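/- Let n ≥ 2 be even, let a = b0, b1, …, bn = c be elements of M with b0 β b1 γ b2 β b3 … γ bn (consecutive elements alternately β- and γ-related, starting with β) and a α c. Then there exists an n-(n−2)-n chain; indeed the elements Ai = t1(a, bi, c) (with A0 = a), Bj = t2(a, b(n−1−j), c) for 0 ≤ j ≤ n−2, and Ci = t3(a, bi, c) (with Cn = c) form such a chain. (Base case of the proof of Lemma 3.1.) -/

import Mathlib

/-- Alternating relational composition with `k` factors, alternating between
`δ` and `ε`, starting with `δ`.  `AltRel δ ε 0` is equality. -/
def AltRel {M : Type*} (δ ε : M → M → Prop) : ℕ → M → M → Prop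
  | 0, x, z => x = z
  | k+1, x, z => ∃ y, δ x y ∧ AltRel ε δ k y z

/-- A ternary operation `t` is compatible with the relation `θ`. -/
def Compat {M : Type*} (θ : M → M → Prop) (t : M → M → M → M) : Prop :=
  ∀ x x' y y' z z', θ x x' → θ y y' → θ z z' → θ (t x y z) (t x' y' z')

/-- An `n`-`ℓ`-`n` chain from `a` to `c`, encoded as a function `D : ℕ → M` whose
relevant values are the `2*n + ℓ + 1` elements
`A₀,…,A_{n-1}, B₀,…,B_ℓ, C₁,…,C_n` (so `B j = D (n + j)`):
consecutive elements are alternately `β`- and `γ`-related starting with `β`,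
(C1) every element is `α`-related to `a`, and
(C2) for every `j ≤ ℓ`, both `(a, B j)` and `(B j, c)` belong to the
alternating composition of `β` and `γ` with `n` factors starting with `β`. -/
def IsNLNChain {M : Type*} (α β γ : M → M → Prop) (n ℓ : ℕ) (a c : M)
    (D : ℕ → M) : Prop :=
  D 0 = a ∧ D (2*n + ℓ) = c ∧
  (∀ i < 2*n + ℓ, if Even i then β (D i) (D (i+1)) else γ (D i) (D (i+1))) ∧
  (∀ i ≤ 2*n + ℓ, α a (D i)) ∧
  (∀ j ≤ ℓ, AltRel β γ n a (D (n + j)) ∧ AltRel β γ n (D (n + j)) c)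


theorem altrel_of_chain {M : Type*} (n : ℕ) :
    ∀ (δ ε : M → M → Prop) (f : ℕ → M),
    (∀ i < n, if Even i then δ (f i) (f (i+1)) else ε (f i) (f (i+1))) →
    AltRel δ ε n (f 0) (f n) := by
  induction n with
  | zero => intro δ ε f _; rfl
  | succ n ih =>
    intro δ ε f h
    refine ⟨f 1, by simpa using h 0 (by omega), ?_⟩
    have key : ∀ i < n, if Even i then ε (f (i+1)) (f (i+2)) else δ (f (i+1)) (f (i+2)) := by
      intro i hi
      have h2 := h (i+1) (by omega)
      rcases Nat.even_or_odd i with he | ho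
      · have hne : ¬ Even (i+1) := by simp [Nat.even_add_one, he]
        rw [if_neg hne] at h2
        rw [if_pos he]
        exact h2
      · have ho' : ¬ Even i := Nat.not_even_iff_odd.mpr ho
        have : Even (i+1) := Nat.even_add_one.mpr ho'
        rw [if_pos this] at h2
        rw [if_neg ho']
        exact h2
    exact ih ε δ (fun i => f (i+1)) key

theorem stmt_5
    {M : Type*} [Nonempty M]
    (t1 t2 t3 : M → M → M → M) (α β γ : M → M → Prop)
    (hJ1 : ∀ x y : M, t1 x y x = x)
    (hJ2 : ∀ x y : M, t2 x y x = x)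
    (hJ3 : ∀ x y : M, t3 x y x = x)
    (hJ4 : ∀ x z : M, t1 x x z = x)
    (hJ5 : ∀ x z : M, t1 x z z = t2 x z z)
    (hJ6 : ∀ x z : M, t2 x x z = t3 x x z)
    (hJ7 : ∀ x z : M, t3 x z z = z)
    (hα : Equivalence α) (hβ : Equivalence β) (hγ : Equivalence γ)
    (hcong : ∀ θ ∈ ({α, β, γ} : Set (M → M → Prop)),
      Compat θ t1 ∧ Compat θ t2 ∧ Compat θ t3)
    (n : ℕ) (hn : 2 ≤ n) (hne : Even n) (a c : M) (b : ℕ → M)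
    (hb0 : b 0 = a) (hbn : b n = c)
    (hbalt : ∀ i < n, if Even i then β (b i) (b (i+1)) else γ (b i) (b (i+1)))
    (hac : α a c) :
    IsNLNChain α β γ n (n - 2) a c
      (fun i =>
        if i < n then t1 a (b i) c
        else if i ≤ 2*n - 2 then t2 a (b (n - 1 - (i - n))) c
        else t3 a (b (i - (2*n - 2))) c) := by

  have hmα : α ∈ ({α, β, γ} : Set (M → M → Prop)) := Set.mem_insert _ _
  have hmβ : β ∈ ({α, β, γ} : Set (M → M → Prop)) :=
    Set.mem_insert_iff.mpr (Or.inr (Set.mem_insert _ _))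
  have hmγ : γ ∈ ({α, β, γ} : Set (M → M → Prop)) :=
    Set.mem_insert_iff.mpr (Or.inr (Set.mem_insert_iff.mpr (Or.inr rfl)))
  obtain ⟨cα1, cα2, cα3⟩ := hcong α hmα
  obtain ⟨cβ1, cβ2, cβ3⟩ := hcong β hmβ
  obtain ⟨cγ1, cγ2, cγ3⟩ := hcong γ hmγ
  have hn2 : n % 2 = 0 := Nat.even_iff.mp hne
  set D : ℕ → M := fun i =>
        if i < n then t1 a (b i) c
        else if i ≤ 2*n - 2 then t2 a (b (n - 1 - (i - n))) c
        else t3 a (b (i - (2*n - 2))) c with hDdef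
  have hD1 : ∀ i, i < n → D i = t1 a (b i) c := by
    intro i hi; simp only [hDdef]; rw [if_pos hi]
  have hD2 : ∀ i, ¬ i < n → i ≤ 2*n - 2 → D i = t2 a (b (n - 1 - (i - n))) c := by
    intro i h1 h2; simp only [hDdef]; rw [if_neg h1, if_pos h2]
  have hD3 : ∀ i, ¬ i < n → ¬ i ≤ 2*n - 2 → D i = t3 a (b (i - (2*n - 2))) c := by
    intro i h1 h2; simp only [hDdef]; rw [if_neg h1, if_neg h2]
  refine ⟨?_, ?_, ?_, ?_, ?_⟩
  · -- D 0 = a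
    rw [hD1 0 (by omega), hb0, hJ4]
  · -- D (2n + (n-2)) = c
    rw [hD3 (2*n + (n-2)) (by omega) (by omega)]
    have : 2*n + (n-2) - (2*n - 2) = n := by omega
    rw [this, hbn, hJ7]
  · -- chain condition
    intro i hi
    have hib : ∀ k < n, k % 2 = 0 → β (b k) (b (k+1)) := by
      intro k hk hk2
      have := hbalt k hk
      rwa [if_pos (Nat.even_iff.mpr hk2)] at this
    have hig : ∀ k < n, k % 2 = 1 → γ (b k) (b (k+1)) := by
      intro k hk hk2
      have := hbalt k hk
      rwa [if_neg (by rw [Nat.even_iff]; omega)] at this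
    rcases lt_or_ge (i+1) n with h1 | h1
    · -- both in t1 region
      rw [hD1 i (by omega), hD1 (i+1) h1]
      rcases Nat.even_or_odd i with he | ho
      · rw [if_pos he]
        exact cβ1 a a (b i) (b (i+1)) c c (hβ.refl a) (hib i (by omega) (Nat.even_iff.mp he)) (hβ.refl c)
      · rw [if_neg (Nat.not_even_iff_odd.mpr ho)]
        exact cγ1 a a (b i) (b (i+1)) c c (hγ.refl a) (hig i (by omega) (Nat.odd_iff.mp ho)) (hγ.refl c)
    · rcases Nat.lt_or_ge i n with h2 | h2
      · -- i = n-1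
        have hieq : i = n - 1 := by omega
        have hio : ¬ Even i := by rw [Nat.even_iff]; omega
        rw [if_neg hio]
        rw [hD1 i h2, hD2 (i+1) (by omega) (by omega)]
        have hidx : n - 1 - (i + 1 - n) = n - 1 := by omega
        rw [hidx]
        have hγb : γ (b (n-1)) c := by
          have := hig (n-1) (by omega) (by omega)
          have heq : n - 1 + 1 = n := by omega
          rwa [heq, hbn] at this
        have s1 : γ (t1 a (b i) c) (t1 a c c) :=
          cγ1 a a (b i) c c c (hγ.refl a) (hieq ▸ hγb) (hγ.refl c)
        rw [hJ5] at s1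
        have s2 : γ (t2 a c c) (t2 a (b (n-1)) c) :=
          cγ2 a a c (b (n-1)) c c (hγ.refl a) (hγ.symm hγb) (hγ.refl c)
        exact hγ.trans s1 s2
      · rcases Nat.lt_or_ge (i+1) (2*n - 1) with h3 | h3
        · -- both in t2 region, i+1 ≤ 2n-2
          rw [hD2 i (by omega) (by omega), hD2 (i+1) (by omega) (by omega)]
          have e1 : n - 1 - (i - n) = (n - 2 - (i - n)) + 1 := by omega
          have e2 : n - 1 - (i + 1 - n) = n - 2 - (i - n) := by omega
          set k := n - 2 - (i - n) with hk
          rw [e1, e2]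
          rcases Nat.even_or_odd i with he | ho
          · rw [if_pos he]
            have hkp : k % 2 = 0 := by
              have := Nat.even_iff.mp he; omega
            have hb' := hib k (by omega) hkp
            exact cβ2 a a (b (k+1)) (b k) c c (hβ.refl a) (hβ.symm hb') (hβ.refl c)
          · rw [if_neg (Nat.not_even_iff_odd.mpr ho)]
            have hkp : k % 2 = 1 := by
              have := Nat.odd_iff.mp ho; omega
            have hb' := hig k (by omega) hkp
            exact cγ2 a a (b (k+1)) (b k) c c (hγ.refl a) (hγ.symm hb') (hγ.refl c)
        · rcases Nat.eq_or_lt_of_le h3 with h4 | h4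
          · -- i = 2n - 2
            have hieq : i = 2*n - 2 := by omega
            have hiev : Even i := by rw [Nat.even_iff]; omega
            rw [if_pos hiev]
            rw [hD2 i (by omega) (by omega), hD3 (i+1) (by omega) (by omega)]
            have e1 : n - 1 - (i - n) = 1 := by omega
            have e2 : i + 1 - (2*n - 2) = 1 := by omega
            rw [e1, e2]
            have hβb : β a (b 1) := by
              have := hib 0 (by omega) (by omega)
              rwa [hb0] at this
            have s1 : β (t2 a (b 1) c) (t2 a a c) :=
              cβ2 a a (b 1) a c c (hβ.refl a) (hβ.symm hβb) (hβ.refl c)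
            rw [hJ6] at s1
            have s2 : β (t3 a a c) (t3 a (b 1) c) :=
              cβ3 a a a (b 1) c c (hβ.refl a) hβb (hβ.refl c)
            exact hβ.trans s1 s2
          · -- t3 region
            rw [hD3 i (by omega) (by omega), hD3 (i+1) (by omega) (by omega)]
            have e1 : i + 1 - (2*n - 2) = (i - (2*n - 2)) + 1 := by omega
            set m := i - (2*n - 2) with hm
            rw [e1]
            have hmn : m < n := by omega
            rcases Nat.even_or_odd i with he | ho
            · rw [if_pos he]
              have hmp : m % 2 = 0 := by
                have := Nat.even_iff.mp he; omega
              exact cβ3 a a (b m) (b (m+1)) c c (hβ.refl a) (hib m hmn hmp) (hβ.refl c)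
            · rw [if_neg (Nat.not_even_iff_odd.mpr ho)]
              have hmp : m % 2 = 1 := by
                have := Nat.odd_iff.mp ho; omega
              exact cγ3 a a (b m) (b (m+1)) c c (hγ.refl a) (hig m hmn hmp) (hγ.refl c)
  · -- C1
    intro i hi
    have hA1 : ∀ x, α a (t1 a x c) := by
      intro x
      have h1 : α (t1 a x c) (t1 a x a) :=
        cα1 a a x x c a (hα.refl a) (hα.refl x) (hα.symm hac)
      rw [hJ1 a x] at h1
      exact hα.symm h1
    have hA2 : ∀ x, α a (t2 a x c) := by
      intro x
      have h1 : α (t2 a x c) (t2 a x a) :=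
        cα2 a a x x c a (hα.refl a) (hα.refl x) (hα.symm hac)
      rw [hJ2 a x] at h1
      exact hα.symm h1
    have hA3 : ∀ x, α a (t3 a x c) := by
      intro x
      have h1 : α (t3 a x c) (t3 a x a) :=
        cα3 a a x x c a (hα.refl a) (hα.refl x) (hα.symm hac)
      rw [hJ3 a x] at h1
      exact hα.symm h1
    rcases Nat.lt_or_ge i n with h1 | h1
    · rw [hD1 i h1]; exact hA1 _
    · rcases le_or_gt i (2*n - 2) with h2 | h2
      · rw [hD2 i (by omega) h2]; exact hA2 _
      · rw [hD3 i (by omega) (by omega)]; exact hA3 _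
  · -- C2
    intro j hj
    have hDB : D (n + j) = t2 a (b (n - 1 - j)) c := by
      rw [hD2 (n+j) (by omega) (by omega)]
      have : n + j - n = j := by omega
      rw [this]
    rw [hDB]
    constructor
    · have key : ∀ i < n, if Even i then
          β (t2 a (b (n-1-j)) (b i)) (t2 a (b (n-1-j)) (b (i+1)))
          else γ (t2 a (b (n-1-j)) (b i)) (t2 a (b (n-1-j)) (b (i+1))) := by
        intro i hi
        have h2 := hbalt i hi
        rcases Nat.even_or_odd i with he | ho
        · rw [if_pos he] at h2 ⊢
          exact cβ2 a a (b (n-1-j)) (b (n-1-j)) (b i) (b (i+1)) (hβ.refl a) (hβ.refl _) h2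
        · rw [if_neg (Nat.not_even_iff_odd.mpr ho)] at h2 ⊢
          exact cγ2 a a (b (n-1-j)) (b (n-1-j)) (b i) (b (i+1)) (hγ.refl a) (hγ.refl _) h2
      have := altrel_of_chain n β γ (fun i => t2 a (b (n-1-j)) (b i)) key
      rwa [hb0, hbn, hJ2] at this
    · have key : ∀ i < n, if Even i then
          β (t2 (b i) (b (n-1-j)) c) (t2 (b (i+1)) (b (n-1-j)) c)
          else γ (t2 (b i) (b (n-1-j)) c) (t2 (b (i+1)) (b (n-1-j)) c) := by
        intro i hi
        have h2 := hbalt i hi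
        rcases Nat.even_or_odd i with he | ho
        · rw [if_pos he] at h2 ⊢
          exact cβ2 (b i) (b (i+1)) (b (n-1-j)) (b (n-1-j)) c c h2 (hβ.refl _) (hβ.refl c)
        · rw [if_neg (Nat.not_even_iff_odd.mpr ho)] at h2 ⊢
          exact cγ2 (b i) (b (i+1)) (b (n-1-j)) (b (n-1-j)) c c h2 (hγ.refl _) (hγ.refl c)
      have := altrel_of_chain n β γ (fun i => t2 (b i) (b (n-1-j)) c) key
      rwa [hb0, hbn, hJ2] at this
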